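/- arXiv:1504.08079 — 9 statements merged into one kernel-verified Lean document; each statement's English description precedes it below -/
import Mathlib

section
/- For any GPPA sequence {x^k} and every k ≥ 1, one has the descent inequality f(x^k) − f(x^{k+1}) ≥ ((t − L)/2)·‖x^k − x^{k+1}‖². -/
open scoped RealInnerProductSpace

lemma descent {E : Type*} [NormedAddCommGroup E] [InnerProductSpace ℝ E] [CompleteSpace E]
    (g : E → ℝ) (g' : E → E) (L : ℝ) (hL : 0 ≤ L)
    (hgrad : ∀ z, HasGradientAt g (g' z) z)
    (hlip : LipschitzWith L.toNNReal g') (a b : E) :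
    g b ≤ g a + ⟪g' a, b - a⟫ + L / 2 * ‖b - a‖ ^ 2 := by
  set v := b - a with hv
  set φ : ℝ → ℝ := fun s => g (a + s • v) with hφ
  have hline : ∀ s : ℝ, HasDerivAt (fun s : ℝ => a + s • v) v s := by
    intro s
    simpa using ((hasDerivAt_id s).smul_const v).const_add a
  have hφ' : ∀ s : ℝ, HasDerivAt φ (⟪g' (a + s • v), v⟫) s := by
    intro s
    have h1 := (hgrad (a + s • v)).hasFDerivAt
    have := h1.comp_hasDerivAt s (hline s)
    simp at this
    exact this
  have hcont : Continuous fun s : ℝ => ⟪g' (a + s • v), v⟫ := by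
    have : Continuous fun s : ℝ => g' (a + s • v) :=
      hlip.continuous.comp (by continuity)
    exact this.inner continuous_const
  have hint : g b - g a = ∫ s in (0:ℝ)..1, ⟪g' (a + s • v), v⟫ := by
    have := intervalIntegral.integral_eq_sub_of_hasDerivAt
      (f := φ) (f' := fun s => ⟪g' (a + s • v), v⟫)
      (fun s _ => hφ' s) (hcont.intervalIntegrable 0 1)
    simp only [hφ] at this
    rw [this]; norm_num [hv]
  have hbound : ∀ s ∈ Set.Icc (0:ℝ) 1,
      ⟪g' (a + s • v), v⟫ ≤ ⟪g' a, v⟫ + L * s * ‖v‖ ^ 2 := by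
    intro s hs
    have h1 : ⟪g' (a + s • v) - g' a, v⟫ ≤ ‖g' (a + s • v) - g' a‖ * ‖v‖ :=
      real_inner_le_norm _ _
    have h2 : ‖g' (a + s • v) - g' a‖ ≤ L * (s * ‖v‖) := by
      have := hlip.dist_le_mul (a + s • v) a
      rw [Real.coe_toNNReal _ hL] at this
      simpa [dist_eq_norm, norm_smul, abs_of_nonneg hs.1, mul_assoc] using this
    have h3 : ⟪g' (a + s • v) - g' a, v⟫ ≤ L * s * ‖v‖ ^ 2 := by
      calc ⟪g' (a + s • v) - g' a, v⟫ ≤ ‖g' (a + s • v) - g' a‖ * ‖v‖ := h1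
        _ ≤ L * (s * ‖v‖) * ‖v‖ := mul_le_mul_of_nonneg_right h2 (norm_nonneg _)
        _ = L * s * ‖v‖ ^ 2 := by ring
    have h4 := inner_sub_left (𝕜 := ℝ) (g' (a + s • v)) (g' a) v
    rw [h4] at h3
    linarith
  have hmono : (∫ s in (0:ℝ)..1, ⟪g' (a + s • v), v⟫)
      ≤ ∫ s in (0:ℝ)..1, (⟪g' a, v⟫ + L * s * ‖v‖ ^ 2) := by
    apply intervalIntegral.integral_mono_on (by norm_num)
      (hcont.intervalIntegrable 0 1)
      ((by continuity : Continuous fun s : ℝ => ⟪g' a, v⟫ + L * s * ‖v‖^2).intervalIntegrable 0 1)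
    exact hbound
  have hcalc : (∫ s in (0:ℝ)..1, (⟪g' a, v⟫ + L * s * ‖v‖ ^ 2))
      = ⟪g' a, v⟫ + L / 2 * ‖v‖ ^ 2 := by
    have e : ∀ s : ℝ, ⟪g' a, v⟫ + L * s * ‖v‖ ^ 2 = ⟪g' a, v⟫ + (L * ‖v‖ ^ 2) * s :=
      fun s => by ring
    simp_rw [e]
    rw [intervalIntegral.integral_add intervalIntegrable_const
      ((by continuity : Continuous fun s : ℝ => L * ‖v‖ ^ 2 * s).intervalIntegrable 0 1),
      intervalIntegral.integral_const_mul]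
    simp [integral_id]
    ring
  have := hmono.trans_eq hcalc
  rw [← hint] at this
  linarith

/-- Descent inequality for the GPPA: for every `k ≥ 1`,
`f(x^k) − f(x^{k+1}) ≥ ((t − L)/2)·‖x^k − x^{k+1}‖²`, where `f = g₁ + g₂ − h`. -/
theorem stmt_1 {n : ℕ}
    (g₁ : EuclideanSpace ℝ (Fin n) → EReal)
    (g₂ h : EuclideanSpace ℝ (Fin n) → ℝ)
    (g₂' : EuclideanSpace ℝ (Fin n) → EuclideanSpace ℝ (Fin n))
    (L t : ℝ) (hL : 0 ≤ L) (ht : L < t)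
    (hproper : ∃ z, g₁ z ≠ ⊤) (hnotbot : ∀ z, g₁ z ≠ ⊥)
    (hlsc : LowerSemicontinuous g₁)
    (hgrad : ∀ z, HasGradientAt g₂ (g₂' z) z)
    (hlip : LipschitzWith L.toNNReal g₂')
    (hconv : ConvexOn ℝ Set.univ h)
    (x y : ℕ → EuclideanSpace ℝ (Fin n))
    (hdom : ∀ k, g₁ (x k) ≠ ⊤)
    (hy : ∀ k z, ⟪y k, z - x k⟫ ≤ h z - h (x k))
    (hmin : ∀ k z,
      g₁ (x (k+1)) - ((⟪y k - g₂' (x k), x (k+1) - x k⟫ : ℝ) : EReal)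
        + ((t/2 * ‖x (k+1) - x k‖^2 : ℝ) : EReal)
      ≤ g₁ z - ((⟪y k - g₂' (x k), z - x k⟫ : ℝ) : EReal)
        + ((t/2 * ‖z - x k‖^2 : ℝ) : EReal)) :
    ∀ k ≥ 1,
      (((t - L)/2 * ‖x k - x (k+1)‖^2 : ℝ) : EReal)
        ≤ (g₁ (x k) + (g₂ (x k) : ℝ) - ((h (x k) : ℝ) : EReal))
          - (g₁ (x (k+1)) + ((g₂ (x (k+1)) : ℝ) : EReal) - ((h (x (k+1)) : ℝ) : EReal)) := by
  intro k _
  set A := (g₁ (x k)).toReal with hA'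
  set B := (g₁ (x (k+1))).toReal with hB'
  have hA : g₁ (x k) = (A : EReal) := (EReal.coe_toReal (hdom k) (hnotbot _)).symm
  have hB : g₁ (x (k+1)) = (B : EReal) := (EReal.coe_toReal (hdom (k+1)) (hnotbot _)).symm
  set c : ℝ := ⟪y k - g₂' (x k), x (k+1) - x k⟫ with hc
  set d : ℝ := t/2 * ‖x (k+1) - x k‖^2 with hd
  -- real inequality from hmin
  have key : B - c + d ≤ A := by
    have := hmin k (x k)
    rw [hA, hB] at this
    have e1 : ((⟪y k - g₂' (x k), x k - x k⟫ : ℝ) : EReal) = ((0:ℝ) : EReal) := by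
      norm_num
    have e2 : ((t/2 * ‖x k - x k‖^2 : ℝ) : EReal) = ((0:ℝ) : EReal) := by
      norm_num
    rw [e1, e2, ← hc, ← hd] at this
    have : ((B - c + d : ℝ) : EReal) ≤ ((A - 0 + 0 : ℝ) : EReal) := by
      push_cast
      exact this
    rw [EReal.coe_le_coe_iff] at this
    linarith
  have hdesc := descent g₂ g₂' L hL hgrad hlip (x k) (x (k+1))
  have hconvk := hy k (x (k+1))
  have hcs : c = ⟪y k, x (k+1) - x k⟫ - ⟪g₂' (x k), x (k+1) - x k⟫ := by
    rw [hc, inner_sub_left]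
  have hnorm : ‖x k - x (k+1)‖ = ‖x (k+1) - x k‖ := norm_sub_rev _ _
  have final : (t - L)/2 * ‖x k - x (k+1)‖^2
      ≤ (A + g₂ (x k) - h (x k)) - (B + g₂ (x (k+1)) - h (x (k+1))) := by
    rw [hnorm]
    nlinarith [key, hdesc, hconvk]
  rw [hA, hB]
  exact_mod_cast final
end

section
/- If α = inf_{x∈ℝⁿ} f(x) > −∞, then for any GPPA sequence {x^k} the sequence of values {f(x^k)} is non-increasing and converges to some limit ℓ* ≥ α, and ‖x^k − x^{k+1}‖ → 0 as k → +∞. -/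
open scoped RealInnerProductSpace
open Filter Topology

lemma descent_aux {E : Type*} [NormedAddCommGroup E] [InnerProductSpace ℝ E] [CompleteSpace E]
    (g : E → ℝ) (g' : E → E) (L : ℝ) (hL : 0 ≤ L)
    (hgrad : ∀ z, HasGradientAt g (g' z) z)
    (hlip : LipschitzWith L.toNNReal g') (u v : E) :
    g v ≤ g u + ⟪g' u, v - u⟫ + L / 2 * ‖v - u‖ ^ 2 := by
  set d := v - u with hd
  set φ' : ℝ → ℝ := fun s => ⟪g' (u + s • d), d⟫ with hφ'
  have hline : ∀ s : ℝ, HasDerivAt (fun s : ℝ => u + s • d) d s := by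
    intro s
    simpa using ((hasDerivAt_id s).smul_const d).const_add u
  have hφ : ∀ s : ℝ, HasDerivAt (fun s => g (u + s • d)) (φ' s) s := by
    intro s
    have h1 := ((hgrad (u + s • d)).hasFDerivAt).comp_hasDerivAt s (hline s)
    simp [φ', InnerProductSpace.toDual_apply_apply] at h1
    exact h1
  have hcont : Continuous φ' := by
    apply Continuous.inner
    · exact hlip.continuous.comp (by continuity)
    · exact continuous_const
  have hint : IntervalIntegrable φ' MeasureTheory.volume 0 1 :=
    hcont.intervalIntegrable 0 1
  have hftc : ∫ s in (0:ℝ)..1, φ' s = g (u + (1:ℝ) • d) - g (u + (0:ℝ) • d) :=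
    intervalIntegral.integral_eq_sub_of_hasDerivAt (fun s _ => hφ s) hint
  simp only [one_smul, zero_smul, add_zero] at hftc
  have hbound : ∀ s ∈ Set.Icc (0:ℝ) 1, φ' s ≤ ⟪g' u, d⟫ + L * ‖d‖ ^ 2 * s := by
    intro s hs
    have h1 : φ' s - ⟪g' u, d⟫ = ⟪g' (u + s • d) - g' u, d⟫ := by
      rw [inner_sub_left]
    have h2 : ⟪g' (u + s • d) - g' u, d⟫ ≤ ‖g' (u + s • d) - g' u‖ * ‖d‖ :=
      real_inner_le_norm _ _
    have h3 : ‖g' (u + s • d) - g' u‖ ≤ L * (s * ‖d‖) := by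
      have := hlip.dist_le_mul (u + s • d) u
      rw [Real.coe_toNNReal _ hL] at this
      calc ‖g' (u + s • d) - g' u‖ = dist (g' (u + s • d)) (g' u) := by
            rw [dist_eq_norm]
          _ ≤ L * dist (u + s • d) u := this
          _ = L * (s * ‖d‖) := by
            rw [dist_eq_norm]
            simp [norm_smul, abs_of_nonneg hs.1]
    have h4 : ‖g' (u + s • d) - g' u‖ * ‖d‖ ≤ L * (s * ‖d‖) * ‖d‖ :=
      mul_le_mul_of_nonneg_right h3 (norm_nonneg _)
    nlinarith [norm_nonneg d]
  have hintb : IntervalIntegrable (fun s => ⟪g' u, d⟫ + L * ‖d‖ ^ 2 * s)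
      MeasureTheory.volume 0 1 := (by continuity : Continuous _).intervalIntegrable 0 1
  have hmono : ∫ s in (0:ℝ)..1, φ' s ≤ ∫ s in (0:ℝ)..1, (⟪g' u, d⟫ + L * ‖d‖ ^ 2 * s) :=
    intervalIntegral.integral_mono_on (by norm_num) hint hintb hbound
  have hval : ∫ s in (0:ℝ)..1, (⟪g' u, d⟫ + L * ‖d‖ ^ 2 * s) = ⟪g' u, d⟫ + L / 2 * ‖d‖ ^ 2 := by
    rw [intervalIntegral.integral_add ((by continuity : Continuous (fun _ : ℝ => ⟪g' u, d⟫)).intervalIntegrable 0 1) ((by continuity : Continuous (fun s : ℝ => L * ‖d‖ ^ 2 * s)).intervalIntegrable 0 1)]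
    rw [intervalIntegral.integral_const, intervalIntegral.integral_const_mul, integral_id]
    simp [smul_eq_mul]; ring
  rw [hftc, hval] at hmono
  have huv : u + d = v := by simp [hd]
  rw [huv] at hmono
  linarith

/-- If `α = inf f > −∞`, then for any GPPA sequence the values `f(x^k)` are non-increasing
and converge to some limit `ℓ* ≥ α`, and `‖x^k − x^{k+1}‖ → 0`. Here `f = g₁ + g₂ − h`. -/
theorem stmt_2 {n : ℕ}
    (g₁ : EuclideanSpace ℝ (Fin n) → EReal)
    (g₂ h : EuclideanSpace ℝ (Fin n) → ℝ)
    (g₂' : EuclideanSpace ℝ (Fin n) → EuclideanSpace ℝ (Fin n))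
    (L t : ℝ) (hL : 0 ≤ L) (ht : L < t)
    (hproper : ∃ z, g₁ z ≠ ⊤) (hnotbot : ∀ z, g₁ z ≠ ⊥)
    (hlsc : LowerSemicontinuous g₁)
    (hgrad : ∀ z, HasGradientAt g₂ (g₂' z) z)
    (hlip : LipschitzWith L.toNNReal g₂')
    (hconv : ConvexOn ℝ Set.univ h)
    (f : EuclideanSpace ℝ (Fin n) → EReal)
    (hf : ∀ z, f z = g₁ z + ((g₂ z : ℝ) : EReal) - ((h z : ℝ) : EReal))
    (hbdd : (⨅ z, f z) ≠ ⊥)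
    (x y : ℕ → EuclideanSpace ℝ (Fin n))
    (hdom : ∀ k, g₁ (x k) ≠ ⊤)
    (hy : ∀ k z, ⟪y k, z - x k⟫ ≤ h z - h (x k))
    (hmin : ∀ k z,
      g₁ (x (k+1)) - ((⟪y k - g₂' (x k), x (k+1) - x k⟫ : ℝ) : EReal)
        + ((t/2 * ‖x (k+1) - x k‖^2 : ℝ) : EReal)
      ≤ g₁ z - ((⟪y k - g₂' (x k), z - x k⟫ : ℝ) : EReal)
        + ((t/2 * ‖z - x k‖^2 : ℝ) : EReal)) :
    Antitone (fun k => f (x k)) ∧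
    (∃ l : EReal, (⨅ z, f z) ≤ l ∧ Tendsto (fun k => f (x k)) atTop (𝓝 l)) ∧
    Tendsto (fun k => ‖x k - x (k+1)‖) atTop (𝓝 0) := by
  have hfin : ∀ k, g₁ (x k) = (((g₁ (x k)).toReal : ℝ) : EReal) :=
    fun k => (EReal.coe_toReal (hdom k) (hnotbot _)).symm
  set r : ℕ → ℝ := fun k => (g₁ (x k)).toReal with hr
  set F : ℕ → ℝ := fun k => r k + g₂ (x k) - h (x k) with hFdef
  have hfx : ∀ k, f (x k) = ((F k : ℝ) : EReal) := by
    intro k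
    rw [hf (x k), hfin k, ← EReal.coe_add, ← EReal.coe_sub]
  set c := (t - L) / 2 with hc
  have hcpos : 0 < c := by simp only [hc]; linarith
  have key : ∀ k, F (k+1) + c * ‖x (k+1) - x k‖^2 ≤ F k := by
    intro k
    have h1 := hmin k (x k)
    simp only [sub_self, inner_zero_right, norm_zero, ne_eq, OfNat.ofNat_ne_zero,
      not_false_eq_true, zero_pow, mul_zero, EReal.coe_zero, sub_zero, add_zero] at h1
    rw [hfin (k+1), hfin k, ← EReal.coe_sub, ← EReal.coe_add, EReal.coe_le_coe_iff] at h1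
    rw [inner_sub_left] at h1
    have h2 := descent_aux g₂ g₂' L hL hgrad hlip (x k) (x (k+1))
    have h3 := hy k (x (k+1))
    simp only [hFdef, hc]
    nlinarith [h1, h2, h3]
  have hFanti : Antitone F := antitone_nat_of_succ_le fun k => by
    nlinarith [key k, sq_nonneg ‖x (k+1) - x k‖, mul_nonneg hcpos.le (sq_nonneg ‖x (k+1) - x k‖)]
  set α := (⨅ z, f z) with hα
  have hαle : ∀ k, α ≤ ((F k : ℝ) : EReal) := fun k => (hfx k) ▸ iInf_le _ (x k)
  have hαtop : α ≠ ⊤ := by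
    intro hh
    have := hαle 0
    rw [hh] at this
    exact (EReal.coe_lt_top (F 0)).not_ge this
  have hαr : α = ((α.toReal : ℝ) : EReal) := (EReal.coe_toReal hαtop hbdd).symm
  have hFlb : ∀ k, α.toReal ≤ F k := by
    intro k
    have h1 := hαle k
    rw [hαr] at h1
    exact EReal.coe_le_coe_iff.mp h1
  have hbdd' : BddBelow (Set.range F) := ⟨α.toReal, by rintro _ ⟨k, rfl⟩; exact hFlb k⟩
  set l : ℝ := ⨅ k, F k with hl
  have hlim : Tendsto F atTop (𝓝 l) := tendsto_atTop_ciInf hFanti hbdd'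
  refine ⟨?_, ⟨(l : EReal), ?_, ?_⟩, ?_⟩
  · intro a b hab
    simp only [hfx a, hfx b]
    exact EReal.coe_le_coe_iff.mpr (hFanti hab)
  · rw [hαr]
    exact EReal.coe_le_coe_iff.mpr (le_ciInf hFlb)
  · have : Tendsto (fun k => ((F k : ℝ) : EReal)) atTop (𝓝 (l : EReal)) :=
      EReal.tendsto_coe.mpr hlim
    exact this.congr fun k => (hfx k).symm
  · have hdiff : Tendsto (fun k => F k - F (k+1)) atTop (𝓝 0) := by
      have h2 : Tendsto (fun k => F (k+1)) atTop (𝓝 l) := hlim.comp (tendsto_add_atTop_nat 1)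
      simpa using hlim.sub h2
    have hsq : Tendsto (fun k => ‖x (k+1) - x k‖^2) atTop (𝓝 0) := by
      apply squeeze_zero (fun k => sq_nonneg _) (g := fun k => (F k - F (k+1)) / c)
      · intro k
        rw [le_div_iff₀ hcpos]
        nlinarith [key k]
      · simpa using hdiff.div_const c
    have hn : Tendsto (fun k => ‖x (k+1) - x k‖) atTop (𝓝 0) := by
      have h1 := hsq.sqrt
      simp only [Real.sqrt_sq (norm_nonneg _), Real.sqrt_zero] at h1
      exact h1
    simpa [norm_sub_rev] using hn
end

section
/- Suppose inf_{x∈ℝⁿ} f(x) > −∞ and let {x^k}, {y^k} be a GPPA sequence. If along a subsequence {k_ℓ} one has x^{k_ℓ} → x* and y^{k_ℓ} → y* as ℓ → +∞, then g₁(x^{k_ℓ+1}) → g₁(x*); in particular x* ∈ dom g₁. -/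
open scoped RealInnerProductSpace
open Filter Topology intervalIntegral

lemma my_descent {n : ℕ} (g₂ : EuclideanSpace ℝ (Fin n) → ℝ)
    (g₂' : EuclideanSpace ℝ (Fin n) → EuclideanSpace ℝ (Fin n))
    (L : ℝ) (hL : 0 ≤ L)
    (hgrad : ∀ z, HasGradientAt g₂ (g₂' z) z)
    (hlip : LipschitzWith L.toNNReal g₂') (a b : EuclideanSpace ℝ (Fin n)) :
    g₂ b ≤ g₂ a + ⟪g₂' a, b - a⟫ + L / 2 * ‖b - a‖ ^ 2 := by
  set v := b - a with hv
  have hψ : ∀ s : ℝ, HasDerivAt (fun s : ℝ => g₂ (a + s • v)) ⟪g₂' (a + s • v), v⟫ s := by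
    intro s
    have h1 : HasDerivAt (fun s : ℝ => a + s • v) v s := by
      simpa using ((hasDerivAt_id s).smul_const v).const_add a
    have h2 := (hgrad (a + s • v)).hasFDerivAt.comp_hasDerivAt s h1
    simpa [InnerProductSpace.toDual_apply_apply, Function.comp_def] using h2
  have hcont : Continuous fun s : ℝ => ⟪g₂' (a + s • v), v⟫ := by
    exact (hlip.continuous.comp (by continuity)).inner continuous_const
  have key : g₂ b - g₂ a = ∫ s in (0:ℝ)..1, ⟪g₂' (a + s • v), v⟫ := by
    have := intervalIntegral.integral_eq_sub_of_hasDerivAt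
      (fun s _ => hψ s) (hcont.intervalIntegrable 0 1)
    simpa [hv] using this.symm
  have hbnd : ∀ s ∈ Set.Icc (0:ℝ) 1,
      ⟪g₂' (a + s • v), v⟫ ≤ ⟪g₂' a, v⟫ + (L * ‖v‖ ^ 2) * s := by
    intro s hs
    have h1 : ⟪g₂' (a + s • v) - g₂' a, v⟫ ≤ ‖g₂' (a + s • v) - g₂' a‖ * ‖v‖ :=
      real_inner_le_norm _ _
    have h2 : ‖g₂' (a + s • v) - g₂' a‖ ≤ L * (s * ‖v‖) := by
      have := hlip.dist_le_mul (a + s • v) a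
      rw [dist_eq_norm] at this
      simpa [norm_smul, abs_of_nonneg hs.1, Real.coe_toNNReal L hL, mul_assoc] using this
    have h3 : ⟪g₂' (a + s • v), v⟫ = ⟪g₂' a, v⟫ + ⟪g₂' (a + s • v) - g₂' a, v⟫ := by
      rw [inner_sub_left]; ring
    have h4 : ‖g₂' (a + s • v) - g₂' a‖ * ‖v‖ ≤ L * (s * ‖v‖) * ‖v‖ :=
      mul_le_mul_of_nonneg_right h2 (norm_nonneg _)
    nlinarith [norm_nonneg v]
  have hint : ∫ s in (0:ℝ)..1, ⟪g₂' (a + s • v), v⟫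
      ≤ ∫ s in (0:ℝ)..1, (⟪g₂' a, v⟫ + (L * ‖v‖ ^ 2) * s) := by
    apply intervalIntegral.integral_mono_on (by norm_num)
      (hcont.intervalIntegrable 0 1)
      ((continuous_const.add (continuous_const.mul continuous_id)).intervalIntegrable 0 1)
    exact hbnd
  have hval : ∫ s in (0:ℝ)..1, (⟪g₂' a, v⟫ + (L * ‖v‖ ^ 2) * s)
      = ⟪g₂' a, v⟫ + L / 2 * ‖v‖ ^ 2 := by
    rw [intervalIntegral.integral_add intervalIntegrable_const
      (intervalIntegrable_const.mul_continuousOn continuous_id'.continuousOn)]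
    · rw [intervalIntegral.integral_const_mul, integral_id,
        intervalIntegral.integral_const]
      norm_num
      ring
  linarith [key ▸ hint.trans_eq hval]
open Filter Topology

/-- If `inf f > −∞` and along a subsequence `x^{k_ℓ} → x*`, `y^{k_ℓ} → y*`, then
`g₁(x^{k_ℓ+1}) → g₁(x*)`; in particular `x* ∈ dom g₁`. Here `f = g₁ + g₂ − h`. -/
theorem stmt_4 {n : ℕ}
    (g₁ : EuclideanSpace ℝ (Fin n) → EReal)
    (g₂ h : EuclideanSpace ℝ (Fin n) → ℝ)
    (g₂' : EuclideanSpace ℝ (Fin n) → EuclideanSpace ℝ (Fin n))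
    (L t : ℝ) (hL : 0 ≤ L) (ht : L < t)
    (hproper : ∃ z, g₁ z ≠ ⊤) (hnotbot : ∀ z, g₁ z ≠ ⊥)
    (hlsc : LowerSemicontinuous g₁)
    (hgrad : ∀ z, HasGradientAt g₂ (g₂' z) z)
    (hlip : LipschitzWith L.toNNReal g₂')
    (hconv : ConvexOn ℝ Set.univ h)
    (f : EuclideanSpace ℝ (Fin n) → EReal)
    (hf : ∀ z, f z = g₁ z + ((g₂ z : ℝ) : EReal) - ((h z : ℝ) : EReal))
    (hbdd : (⨅ z, f z) ≠ ⊥)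
    (x y : ℕ → EuclideanSpace ℝ (Fin n))
    (hdom : ∀ k, g₁ (x k) ≠ ⊤)
    (hy : ∀ k z, ⟪y k, z - x k⟫ ≤ h z - h (x k))
    (hmin : ∀ k z,
      g₁ (x (k+1)) - ((⟪y k - g₂' (x k), x (k+1) - x k⟫ : ℝ) : EReal)
        + ((t/2 * ‖x (k+1) - x k‖^2 : ℝ) : EReal)
      ≤ g₁ z - ((⟪y k - g₂' (x k), z - x k⟫ : ℝ) : EReal)
        + ((t/2 * ‖z - x k‖^2 : ℝ) : EReal))
    (φ : ℕ → ℕ) (hφ : StrictMono φ)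
    (xstar ystar : EuclideanSpace ℝ (Fin n))
    (hxconv : Tendsto (fun l => x (φ l)) atTop (𝓝 xstar))
    (hyconv : Tendsto (fun l => y (φ l)) atTop (𝓝 ystar)) :
    Tendsto (fun l => g₁ (x (φ l + 1))) atTop (𝓝 (g₁ xstar)) ∧ g₁ xstar ≠ ⊤ := by
  -- real values of g₁ along the sequence
  set G : ℕ → ℝ := fun k => (g₁ (x k)).toReal with hGdef
  have hG : ∀ k, g₁ (x k) = ((G k : ℝ) : EReal) :=
    fun k => (EReal.coe_toReal (hdom k) (hnotbot _)).symm
  -- real form of the minimization property, for targets with finite g₁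
  have hub : ∀ k z (r : ℝ), g₁ z = ((r : ℝ) : EReal) →
      G (k+1) ≤ r + ⟪y k - g₂' (x k), x (k+1) - z⟫
        + t/2 * (‖z - x k‖^2 - ‖x (k+1) - x k‖^2) := by
    intro k z r hr
    have H := hmin k z
    rw [hG, hr] at H
    have H' : G (k+1) - ⟪y k - g₂' (x k), x (k+1) - x k⟫ + t/2 * ‖x (k+1) - x k‖^2
        ≤ r - ⟪y k - g₂' (x k), z - x k⟫ + t/2 * ‖z - x k‖^2 := by
      exact_mod_cast H
    have hin : ⟪y k - g₂' (x k), x (k+1) - x k⟫ - ⟪y k - g₂' (x k), z - x k⟫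
        = ⟪y k - g₂' (x k), x (k+1) - z⟫ := by
      rw [← inner_sub_right]
      congr 1
      abel
    linarith
  -- sufficient decrease
  set F : ℕ → ℝ := fun k => G k + g₂ (x k) - h (x k) with hFdef
  have hcoef : (0:ℝ) < (t - L)/2 := by linarith
  have hdec : ∀ k, F (k+1) + (t - L)/2 * ‖x (k+1) - x k‖^2 ≤ F k := by
    intro k
    have h1 := hub k (x k) (G k) (hG k)
    simp only [sub_self, norm_zero] at h1
    have h2 := my_descent g₂ g₂' L hL hgrad hlip (x k) (x (k+1))
    have h3 := hy k (x (k+1))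
    have h4 : ⟪y k - g₂' (x k), x (k+1) - x k⟫
        = ⟪y k, x (k+1) - x k⟫ - ⟪g₂' (x k), x (k+1) - x k⟫ := inner_sub_left _ _ _
    simp only [hFdef]
    nlinarith [norm_nonneg (x (k+1) - x k), sq_nonneg (‖x (k+1) - x k‖)]
  have hstep : ∀ k, F (k+1) ≤ F k := by
    intro k
    have h0 := mul_nonneg hcoef.le (sq_nonneg ‖x (k+1) - x k‖)
    exact (le_add_of_nonneg_right h0).trans (hdec k)
  have hanti : Antitone F := antitone_nat_of_succ_le hstep
  -- F is bounded below
  have hFf : ∀ k, f (x k) = ((F k : ℝ) : EReal) := by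
    intro k
    rw [hf, hG]
    norm_cast
  have hm : ∀ k, ((⨅ z, f z).toReal : ℝ) ≤ F k := by
    intro k
    have h1 : (⨅ z, f z) ≤ f (x k) := iInf_le _ _
    have h2 : (⨅ z, f z) ≠ ⊤ := by
      intro hc
      rw [hc, hFf k] at h1
      exact (EReal.coe_ne_top (F k)) (top_le_iff.mp h1)
    rw [hFf k] at h1
    have := EReal.coe_toReal h2 hbdd
    rw [← this] at h1
    exact_mod_cast h1
  clear_value G F
  -- F converges
  have hbelow : BddBelow (Set.range F) :=
    ⟨(⨅ z, f z).toReal, by rintro _ ⟨k, rfl⟩; exact hm k⟩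
  have hFconv : Tendsto F atTop (𝓝 (⨅ k, F k)) := tendsto_atTop_ciInf hanti hbelow
  have hdiff : Tendsto (fun k => F k - F (k+1)) atTop (𝓝 0) := by
    have h1 : Tendsto (fun k => F (k+1)) atTop (𝓝 (⨅ k, F k)) :=
      hFconv.comp (tendsto_add_atTop_nat 1)
    simpa using hFconv.sub h1
  have hd2 : Tendsto (fun k => ‖x (k+1) - x k‖^2) atTop (𝓝 0) := by
    refine squeeze_zero (g := fun k => (F k - F (k+1)) / ((t - L)/2))
      (fun k => sq_nonneg _) (fun k => ?_)
      (by simpa using hdiff.div_const ((t - L)/2))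
    rw [le_div_iff₀ hcoef]
    have := hdec k
    linarith
  have hdto : Tendsto (fun k => ‖x (k+1) - x k‖) atTop (𝓝 0) := by
    have h1 : (fun k => ‖x (k+1) - x k‖)
        = fun k => Real.sqrt (‖x (k+1) - x k‖^2) :=
      funext fun k => (Real.sqrt_sq (norm_nonneg _)).symm
    have h2 : Tendsto (fun k => Real.sqrt (‖x (k+1) - x k‖^2)) atTop (𝓝 0) := by
      have h3 := (Real.continuous_sqrt.tendsto 0).comp hd2
      simpa only [Function.comp_def, Real.sqrt_zero] using h3
    rw [h1]
    exact h2
  have hx1 : Tendsto (fun l => x (φ l + 1)) atTop (𝓝 xstar) := by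
    have h0 : Tendsto (fun k => x (k+1) - x k) atTop (𝓝 0) :=
      tendsto_zero_iff_norm_tendsto_zero.mpr hdto
    have h1 : Tendsto (fun l => x (φ l + 1) - x (φ l)) atTop (𝓝 0) :=
      h0.comp hφ.tendsto_atTop
    have h2 := hxconv.add h1
    simpa using h2
  -- limit of the gradient-correction terms
  have hw : Tendsto (fun l => y (φ l) - g₂' (x (φ l))) atTop
      (𝓝 (ystar - g₂' xstar)) :=
    hyconv.sub ((hlip.continuous.tendsto xstar).comp hxconv)
  have hc : ∀ z : EuclideanSpace ℝ (Fin n),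
      Tendsto (fun l => ⟪y (φ l) - g₂' (x (φ l)), x (φ l + 1) - z⟫
        + t/2 * (‖z - x (φ l)‖^2 - ‖x (φ l + 1) - x (φ l)‖^2)) atTop
      (𝓝 (⟪ystar - g₂' xstar, xstar - z⟫ + t/2 * (‖z - xstar‖^2 - 0))) := by
    intro z
    refine Tendsto.add (hw.inner (hx1.sub_const z)) (Tendsto.const_mul _ (Tendsto.sub ?_ ?_))
    · exact ((hxconv.const_sub z).norm.pow 2)
    · exact hd2.comp hφ.tendsto_atTop
  -- limsup bound at any point with finite g₁
  have hlimsup_le : ∀ (z : EuclideanSpace ℝ (Fin n)) (r : ℝ), g₁ z = ((r:ℝ) : EReal) →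
      limsup (fun l => g₁ (x (φ l + 1))) atTop
        ≤ ((r + (⟪ystar - g₂' xstar, xstar - z⟫ + t/2 * (‖z - xstar‖^2 - 0)) : ℝ) : EReal) := by
    intro z r hzr
    have hev : ∀ l, g₁ (x (φ l + 1))
        ≤ ((r + (⟪y (φ l) - g₂' (x (φ l)), x (φ l + 1) - z⟫
          + t/2 * (‖z - x (φ l)‖^2 - ‖x (φ l + 1) - x (φ l)‖^2)) : ℝ) : EReal) := by
      intro l
      rw [hG]
      have := hub (φ l) z r hzr
      exact_mod_cast (by linarith : G (φ l + 1) ≤ r + (⟪y (φ l) - g₂' (x (φ l)), x (φ l + 1) - z⟫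
          + t/2 * (‖z - x (φ l)‖^2 - ‖x (φ l + 1) - x (φ l)‖^2)))
    have hBt : Tendsto (fun l => ((r + (⟪y (φ l) - g₂' (x (φ l)), x (φ l + 1) - z⟫
          + t/2 * (‖z - x (φ l)‖^2 - ‖x (φ l + 1) - x (φ l)‖^2)) : ℝ) : EReal)) atTop
        (𝓝 ((r + (⟪ystar - g₂' xstar, xstar - z⟫ + t/2 * (‖z - xstar‖^2 - 0)) : ℝ) : EReal)) := by
      rw [EReal.tendsto_coe]
      exact tendsto_const_nhds.add (hc z)
    calc limsup (fun l => g₁ (x (φ l + 1))) atTop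
        ≤ limsup (fun l => ((r + (⟪y (φ l) - g₂' (x (φ l)), x (φ l + 1) - z⟫
          + t/2 * (‖z - x (φ l)‖^2 - ‖x (φ l + 1) - x (φ l)‖^2)) : ℝ) : EReal)) atTop :=
          limsup_le_limsup (Eventually.of_forall hev)
      _ = _ := hBt.limsup_eq
  -- liminf bound from lower semicontinuity
  have hliminf : g₁ xstar ≤ liminf (fun l => g₁ (x (φ l + 1))) atTop := by
    refine le_of_forall_lt fun c hc' => ?_
    obtain ⟨c', hc1, hc2⟩ := exists_between hc'
    have hev : ∀ᶠ l in atTop, c' < g₁ (x (φ l + 1)) := hx1.eventually (hlsc xstar c' hc2)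
    exact lt_of_lt_of_le hc1 (le_liminf_of_le (by isBoundedDefault)
      (hev.mono fun l hl => hl.le))
  -- finiteness of g₁ xstar
  obtain ⟨z₀, hz₀⟩ := hproper
  have hz₀' : g₁ z₀ = (((g₁ z₀).toReal : ℝ) : EReal) := (EReal.coe_toReal hz₀ (hnotbot z₀)).symm
  have hfin : g₁ xstar ≠ ⊤ := by
    have h1 := (hliminf.trans liminf_le_limsup).trans (hlimsup_le z₀ _ hz₀')
    exact ne_top_of_le_ne_top (EReal.coe_ne_top _) h1
  have hrs : g₁ xstar = (((g₁ xstar).toReal : ℝ) : EReal) :=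
    (EReal.coe_toReal hfin (hnotbot xstar)).symm
  refine ⟨?_, hfin⟩
  have h2 := hlimsup_le xstar _ hrs
  simp only [sub_self, inner_zero_right, norm_zero] at h2
  rw [hrs]
  refine tendsto_of_le_liminf_of_limsup_le ?_ ?_
  · rw [← hrs]; exact hliminf
  · calc limsup (fun l => g₁ (x (φ l + 1))) atTop
        ≤ _ := h2
      _ = (((g₁ xstar).toReal : ℝ) : EReal) := by norm_num
end

section
/- Suppose in addition that g₁ is convex and that the stepsize satisfies only t > L/2 (instead of t > L). Then for any GPPA sequence {x^k} and every k ≥ 1 the stronger descent inequality holds: f(x^k) − f(x^{k+1}) ≥ (t − L/2)·‖x^k − x^{k+1}‖². -/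
open scoped RealInnerProductSpace

private lemma descent_aux_s6 {n : ℕ} (g₂ : EuclideanSpace ℝ (Fin n) → ℝ)
    (g₂' : EuclideanSpace ℝ (Fin n) → EuclideanSpace ℝ (Fin n)) (L : ℝ) (hL : 0 ≤ L)
    (hgrad : ∀ z, HasGradientAt g₂ (g₂' z) z) (hlip : LipschitzWith L.toNNReal g₂')
    (p q : EuclideanSpace ℝ (Fin n)) :
    g₂ q ≤ g₂ p + ⟪g₂' p, q - p⟫ + L/2 * ‖q - p‖^2 := by
  set d := q - p with hd
  set F : ℝ → ℝ := fun s => g₂ (p + s • d) - s * ⟪g₂' p, d⟫ - s^2 * (L/2) * ‖d‖^2 with hF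
  have hline : ∀ s : ℝ, HasDerivAt (fun s : ℝ => p + s • d) d s := by
    intro s
    simpa using ((hasDerivAt_id s).smul_const d).const_add p
  have hFd : ∀ s : ℝ, HasDerivAt F (⟪g₂' (p + s • d), d⟫ - ⟪g₂' p, d⟫ - s * L * ‖d‖^2) s := by
    intro s
    have h1 : HasDerivAt (fun s : ℝ => g₂ (p + s • d)) ⟪g₂' (p + s • d), d⟫ s := by
      have := (hgrad (p + s • d)).hasFDerivAt.comp_hasDerivAt s (hline s)
      simp [InnerProductSpace.toDual_apply_apply] at this
      exact this
    have h2 : HasDerivAt (fun s : ℝ => s * ⟪g₂' p, d⟫) ⟪g₂' p, d⟫ s := by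
      simpa using (hasDerivAt_id s).mul_const (⟪g₂' p, d⟫)
    have h3 : HasDerivAt (fun s : ℝ => s^2 * (L/2) * ‖d‖^2) (2*s*(L/2)*‖d‖^2) s := by
      have := ((hasDerivAt_pow 2 s).mul_const (L/2)).mul_const (‖d‖^2)
      exact this.congr_deriv (by ring)
    have := (h1.sub h2).sub h3
    exact this.congr_deriv (by ring)
  have hanti : AntitoneOn F (Set.Icc 0 1) := by
    apply antitoneOn_of_deriv_nonpos (convex_Icc 0 1)
      (fun s _ => ((hFd s).continuousAt).continuousWithinAt)
      (fun s hs => ((hFd s).differentiableAt).differentiableWithinAt)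
    intro s hs
    rw [interior_Icc] at hs
    rw [(hFd s).deriv]
    have hIn : ⟪g₂' (p + s • d) - g₂' p, d⟫ ≤ ‖g₂' (p + s • d) - g₂' p‖ * ‖d‖ :=
      real_inner_le_norm _ _
    rw [inner_sub_left] at hIn
    have hlipb : ‖g₂' (p + s • d) - g₂' p‖ ≤ L * (s * ‖d‖) := by
      have h0 := hlip.dist_le_mul (p + s • d) p
      rw [dist_eq_norm, dist_eq_norm, Real.coe_toNNReal L hL] at h0
      have : p + s • d - p = s • d := by abel
      rw [this, norm_smul, Real.norm_eq_abs, abs_of_pos hs.1] at h0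
      linarith [h0]
    nlinarith [norm_nonneg d, hs.1.le, norm_nonneg (g₂' (p + s • d) - g₂' p)]
  have hkey := hanti (Set.mem_Icc.mpr ⟨le_refl 0, zero_le_one⟩)
    (Set.mem_Icc.mpr ⟨zero_le_one, le_refl 1⟩) zero_le_one
  simp only [hF, one_smul, one_mul, one_pow, zero_smul, zero_mul, zero_pow, add_zero, sub_zero,
    mul_zero, ne_eq, OfNat.ofNat_ne_zero, not_false_eq_true, hd, add_sub_cancel] at hkey
  nlinarith [hkey]

set_option maxHeartbeats 1000000 in
/-- If in addition `g₁` is convex and only `t > L/2` is assumed, then the stronger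
descent inequality `f(x^k) − f(x^{k+1}) ≥ (t − L/2)·‖x^k − x^{k+1}‖²` holds for `k ≥ 1`. -/
theorem stmt_6 {n : ℕ}
    (g₁ : EuclideanSpace ℝ (Fin n) → EReal)
    (g₂ h : EuclideanSpace ℝ (Fin n) → ℝ)
    (g₂' : EuclideanSpace ℝ (Fin n) → EuclideanSpace ℝ (Fin n))
    (L t : ℝ) (hL : 0 ≤ L) (ht : L/2 < t)
    (hproper : ∃ z, g₁ z ≠ ⊤) (hnotbot : ∀ z, g₁ z ≠ ⊥)
    (hlsc : LowerSemicontinuous g₁)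
    (hg₁conv : ∀ u v : EuclideanSpace ℝ (Fin n), ∀ a b : ℝ, 0 ≤ a → 0 ≤ b → a + b = 1 →
      g₁ (a • u + b • v) ≤ ((a : ℝ) : EReal) * g₁ u + ((b : ℝ) : EReal) * g₁ v)
    (hgrad : ∀ z, HasGradientAt g₂ (g₂' z) z)
    (hlip : LipschitzWith L.toNNReal g₂')
    (hconv : ConvexOn ℝ Set.univ h)
    (x y : ℕ → EuclideanSpace ℝ (Fin n))
    (hdom : ∀ k, g₁ (x k) ≠ ⊤)
    (hy : ∀ k z, ⟪y k, z - x k⟫ ≤ h z - h (x k))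
    (hmin : ∀ k z,
      g₁ (x (k+1)) - ((⟪y k - g₂' (x k), x (k+1) - x k⟫ : ℝ) : EReal)
        + ((t/2 * ‖x (k+1) - x k‖^2 : ℝ) : EReal)
      ≤ g₁ z - ((⟪y k - g₂' (x k), z - x k⟫ : ℝ) : EReal)
        + ((t/2 * ‖z - x k‖^2 : ℝ) : EReal)) :
    ∀ k ≥ 1,
      (((t - L/2) * ‖x k - x (k+1)‖^2 : ℝ) : EReal)
        ≤ (g₁ (x k) + ((g₂ (x k) : ℝ) : EReal) - ((h (x k) : ℝ) : EReal))
          - (g₁ (x (k+1)) + ((g₂ (x (k+1)) : ℝ) : EReal) - ((h (x (k+1)) : ℝ) : EReal)) := by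
  intro k _
  have ht0 : 0 < t := lt_of_le_of_lt (by linarith) ht
  set X := x k with hX
  set X' := x (k+1) with hX'
  set c := y k - g₂' X with hc
  set d := X' - X with hd
  set G : ℝ := (g₁ X).toReal with hG
  set G' : ℝ := (g₁ X').toReal with hG'
  have hGX : g₁ X = (G : EReal) := (EReal.coe_toReal (hdom k) (hnotbot X)).symm
  have hGX' : g₁ X' = (G' : EReal) := (EReal.coe_toReal (hdom (k+1)) (hnotbot X')).symm
  set N : ℝ := ‖d‖^2 with hN
  have hNnn : 0 ≤ N := by positivity
  set I : ℝ := ⟪c, d⟫ with hI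
  -- real version of the minimization property
  have hmin' : ∀ z : EuclideanSpace ℝ (Fin n), ∀ r : ℝ, g₁ z = (r : EReal) →
      G' - I + t/2 * N ≤ r - ⟪c, z - X⟫ + t/2 * ‖z - X‖^2 := by
    intro z r hz
    have h0 := hmin k z
    rw [← hX, ← hX', ← hc, ← hd, hGX', hz, ← hN, ← hI] at h0
    exact_mod_cast h0
  -- strong-convexity consequence
  have hkey : ∀ s : ℝ, 0 < s → s < 1 → 0 ≤ (G - G' + I) - t/2 * (2 - s) * N := by
    intro s hs0 hs1
    have ha0 : (0:ℝ) ≤ 1 - s := by linarith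
    have haa : (1 - s) + s = 1 := by ring
    set z : EuclideanSpace ℝ (Fin n) := (1 - s) • X' + s • X with hz
    have hconvz := hg₁conv X' X (1 - s) s ha0 hs0.le haa
    rw [hGX, hGX'] at hconvz
    have hzne : g₁ z ≤ (((1 - s) * G' + s * G : ℝ) : EReal) := by
      push_cast
      exact hconvz
    have hztop : g₁ z ≠ ⊤ := ne_top_of_le_ne_top (EReal.coe_ne_top _) hzne
    have hzr : g₁ z = (((g₁ z).toReal : ℝ) : EReal) := (EReal.coe_toReal hztop (hnotbot z)).symm
    have hzle : (g₁ z).toReal ≤ (1 - s) * G' + s * G := by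
      rw [hzr] at hzne
      exact_mod_cast hzne
    have hzX : z - X = (1 - s) • d := by
      rw [hz, hd]
      module
    have hznorm : ‖z - X‖^2 = (1 - s)^2 * N := by
      rw [hzX, norm_smul, Real.norm_eq_abs, mul_pow, sq_abs, hN]
    have hzinner : ⟪c, z - X⟫ = (1 - s) * I := by
      rw [hzX, real_inner_smul_right, hI]
    have h2 := hmin' z (g₁ z).toReal hzr
    rw [hznorm, hzinner] at h2
    have h3 : s * ((G' - G - I) + t/2 * (2 - s) * N) ≤ 0 := by nlinarith [hzle, h2]
    by_contra hcon
    push_neg at hcon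
    have h4 : s * ((G - G' + I) - t/2 * (2 - s) * N) < 0 := mul_neg_of_pos_of_neg hs0 hcon
    nlinarith [h3, h4]
  have hG'le : G' - G ≤ I - t * N := by
    by_contra hcon
    push_neg at hcon
    have hε0 : 0 < (G' - G) - (I - t * N) := by linarith
    have htN : 0 < t * N + 1 := by positivity
    have hs0 : 0 < min (1/2) (((G' - G) - (I - t * N)) / (t * N + 1)) :=
      lt_min (by norm_num) (div_pos hε0 htN)
    have hs1 : min (1/2) (((G' - G) - (I - t * N)) / (t * N + 1)) < 1 :=
      lt_of_le_of_lt (min_le_left _ _) (by norm_num)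
    have h4 := hkey _ hs0 hs1
    have hsle : min (1/2) (((G' - G) - (I - t * N)) / (t * N + 1))
        ≤ ((G' - G) - (I - t * N)) / (t * N + 1) := min_le_right _ _
    have hsle' : min (1/2) (((G' - G) - (I - t * N)) / (t * N + 1)) * (t * N + 1)
        ≤ (G' - G) - (I - t * N) := (le_div_iff₀ htN).mp hsle
    nlinarith [h4, hsle', hNnn, ht0.le, hs0.le,
      mul_nonneg (mul_nonneg ht0.le hs0.le) hNnn]
  -- descent lemma for g₂
  have hdesc : g₂ X' ≤ g₂ X + ⟪g₂' X, d⟫ + L/2 * N := by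
    have := descent_aux_s6 g₂ g₂' L hL hgrad hlip X X'
    rw [← hd, ← hN] at this
    exact this
  -- subgradient inequality for h
  have hsub : ⟪y k, d⟫ ≤ h X' - h X := by
    have := hy k X'
    rw [← hX, ← hd] at this
    exact this
  have hIsplit : I = ⟪y k, d⟫ - ⟪g₂' X, d⟫ := by
    rw [hI, hc, inner_sub_left]
  -- final real inequality
  have hfinal : (t - L/2) * ‖X - X'‖^2 ≤ (G + g₂ X - h X) - (G' + g₂ X' - h X') := by
    have hrev : ‖X - X'‖^2 = N := by rw [hN, hd, norm_sub_rev]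
    rw [hrev]
    linarith [hG'le, hdesc, hsub, hIsplit.le, hIsplit.ge]
  rw [hGX, hGX']
  exact_mod_cast hfinal
end

section
/- If for every α ∈ ℝ the lower level set L_{≤α} = {x ∈ ℝⁿ : f(x) ≤ α} is bounded, then any GPPA sequence {x^k} is bounded, and hence its set of cluster points is nonempty. -/
open scoped RealInnerProductSpace
open Filter Topology intervalIntegral


/-- Descent lemma. -/
theorem descent_lemma {n : ℕ} (g₂ : EuclideanSpace ℝ (Fin n) → ℝ)
    (g₂' : EuclideanSpace ℝ (Fin n) → EuclideanSpace ℝ (Fin n))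
    (L : ℝ) (hL : 0 ≤ L)
    (hgrad : ∀ z, HasGradientAt g₂ (g₂' z) z)
    (hlip : LipschitzWith L.toNNReal g₂')
    (x v : EuclideanSpace ℝ (Fin n)) :
    g₂ (x + v) ≤ g₂ x + ⟪g₂' x, v⟫ + L / 2 * ‖v‖ ^ 2 := by
  set φ' : ℝ → ℝ := fun s => ⟪g₂' (x + s • v), v⟫ with hφ'
  have hcont : Continuous φ' := by
    apply Continuous.inner
    · exact hlip.continuous.comp (continuous_const.add (continuous_id.smul continuous_const))
    · exact continuous_const
  have hderiv : ∀ s ∈ Set.uIcc (0:ℝ) 1,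
      HasDerivAt (fun s : ℝ => g₂ (x + s • v)) (φ' s) s := by
    intro s _
    have h1 : HasFDerivAt g₂ ((InnerProductSpace.toDual ℝ _) (g₂' (x + s • v))) (x + s • v) :=
      (hgrad (x + s • v)).hasFDerivAt
    have h2 : HasDerivAt (fun s : ℝ => x + s • v) v s := by
      simpa using ((hasDerivAt_id s).smul_const v).const_add x
    have h3 := h1.comp_hasDerivAt s h2
    simp [φ'] at h3
    exact h3
  have hint : IntervalIntegrable φ' MeasureTheory.volume 0 1 :=
    hcont.intervalIntegrable 0 1
  have hFTC := intervalIntegral.integral_eq_sub_of_hasDerivAt hderiv hint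
  simp only [zero_smul, add_zero, one_smul] at hFTC
  have hbound : ∫ s in (0:ℝ)..1, φ' s ≤ ∫ s in (0:ℝ)..1, (⟪g₂' x, v⟫ + L * s * ‖v‖ ^ 2) := by
    apply intervalIntegral.integral_mono_on (by norm_num) hint
    · apply Continuous.intervalIntegrable; fun_prop
    · intro s hs
      have hdiff : ‖g₂' (x + s • v) - g₂' x‖ ≤ L * s * ‖v‖ := by
        have hd : dist (x + s • v) x = s * ‖v‖ := by
          simp [dist_eq_norm, norm_smul, abs_of_nonneg hs.1]
        have h1 := hlip.dist_le_mul (x + s • v) x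
        rw [hd, Real.coe_toNNReal _ hL] at h1
        calc ‖g₂' (x + s • v) - g₂' x‖
            = dist (g₂' (x + s • v)) (g₂' x) := (dist_eq_norm _ _).symm
          _ ≤ L * (s * ‖v‖) := h1
          _ = L * s * ‖v‖ := by ring
      have : ⟪g₂' (x + s • v) - g₂' x, v⟫ ≤ L * s * ‖v‖ * ‖v‖ :=
        le_trans (real_inner_le_norm _ _) (by
          have := mul_le_mul_of_nonneg_right hdiff (norm_nonneg v); linarith)
      have hsplit : φ' s = ⟪g₂' x, v⟫ + ⟪g₂' (x + s • v) - g₂' x, v⟫ := by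
        simp [φ', inner_sub_left]
      rw [hsplit]; nlinarith [sq_nonneg ‖v‖]
  have hval : ∫ s in (0:ℝ)..1, (⟪g₂' x, v⟫ + L * s * ‖v‖ ^ 2)
      = ⟪g₂' x, v⟫ + L / 2 * ‖v‖ ^ 2 := by
    have hI1 : IntervalIntegrable (fun _ : ℝ => (⟪g₂' x, v⟫ : ℝ))
        MeasureTheory.volume 0 1 := intervalIntegrable_const
    have hI2 : IntervalIntegrable (fun s : ℝ => L * s * ‖v‖ ^ 2)
        MeasureTheory.volume 0 1 := by apply Continuous.intervalIntegrable; fun_prop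
    rw [intervalIntegral.integral_add hI1 hI2]
    simp only [intervalIntegral.integral_const, smul_eq_mul]
    have : ∫ s in (0:ℝ)..1, L * s * ‖v‖ ^ 2 = L / 2 * ‖v‖ ^ 2 := by
      have : (fun s : ℝ => L * s * ‖v‖ ^ 2) = fun s : ℝ => (L * ‖v‖ ^ 2) * s := by
        funext s; ring
      rw [this, intervalIntegral.integral_const_mul, integral_id]
      ring
    rw [this]; ring
  linarith [hFTC ▸ hbound.trans_eq hval]


/-- If every lower level set `{x : f(x) ≤ α}` is bounded, then any GPPA sequence is
bounded and its set of cluster points is nonempty. Here `f = g₁ + g₂ − h`. -/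
theorem stmt_7 {n : ℕ}
    (g₁ : EuclideanSpace ℝ (Fin n) → EReal)
    (g₂ h : EuclideanSpace ℝ (Fin n) → ℝ)
    (g₂' : EuclideanSpace ℝ (Fin n) → EuclideanSpace ℝ (Fin n))
    (L t : ℝ) (hL : 0 ≤ L) (ht : L < t)
    (hproper : ∃ z, g₁ z ≠ ⊤) (hnotbot : ∀ z, g₁ z ≠ ⊥)
    (hlsc : LowerSemicontinuous g₁)
    (hgrad : ∀ z, HasGradientAt g₂ (g₂' z) z)
    (hlip : LipschitzWith L.toNNReal g₂')
    (hconv : ConvexOn ℝ Set.univ h)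
    (f : EuclideanSpace ℝ (Fin n) → EReal)
    (hf : ∀ z, f z = g₁ z + ((g₂ z : ℝ) : EReal) - ((h z : ℝ) : EReal))
    (hlevel : ∀ α : ℝ, Bornology.IsBounded {z | f z ≤ ((α : ℝ) : EReal)})
    (x y : ℕ → EuclideanSpace ℝ (Fin n))
    (hdom : ∀ k, g₁ (x k) ≠ ⊤)
    (hy : ∀ k z, ⟪y k, z - x k⟫ ≤ h z - h (x k))
    (hmin : ∀ k z,
      g₁ (x (k+1)) - ((⟪y k - g₂' (x k), x (k+1) - x k⟫ : ℝ) : EReal)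
        + ((t/2 * ‖x (k+1) - x k‖^2 : ℝ) : EReal)
      ≤ g₁ z - ((⟪y k - g₂' (x k), z - x k⟫ : ℝ) : EReal)
        + ((t/2 * ‖z - x k‖^2 : ℝ) : EReal)) :
    Bornology.IsBounded (Set.range x) ∧
    ∃ xstar : EuclideanSpace ℝ (Fin n),
      ∃ φ : ℕ → ℕ, StrictMono φ ∧ Tendsto (fun l => x (φ l)) atTop (𝓝 xstar) := by
  set a : ℕ → ℝ := fun k => (g₁ (x k)).toReal with ha_def
  have ha : ∀ k, g₁ (x k) = ((a k : ℝ) : EReal) :=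
    fun k => (EReal.coe_toReal (hdom k) (hnotbot _)).symm
  set F : ℕ → ℝ := fun k => a k + g₂ (x k) - h (x k) with hF_def
  have hfF : ∀ k, f (x k) = ((F k : ℝ) : EReal) := by
    intro k
    rw [hf, ha k]
    norm_cast
  have key : ∀ k, F (k+1) ≤ F k := by
    intro k
    have hm := hmin k (x k)
    simp only [sub_self, inner_zero_right, norm_zero] at hm
    rw [ha k, ha (k+1)] at hm
    norm_num at hm
    have hm' : a (k+1) - ⟪y k - g₂' (x k), x (k+1) - x k⟫
        + t/2 * ‖x (k+1) - x k‖^2 ≤ a k := by exact_mod_cast hm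
    have hhy := hy k (x (k+1))
    have hdesc := descent_lemma g₂ g₂' L hL hgrad hlip (x k) (x (k+1) - x k)
    have hxx : x k + (x (k+1) - x k) = x (k+1) := by abel
    rw [hxx] at hdesc
    have hinner : ⟪y k - g₂' (x k), x (k+1) - x k⟫
        = ⟪y k, x (k+1) - x k⟫ - ⟪g₂' (x k), x (k+1) - x k⟫ := inner_sub_left _ _ _
    have hLt : L/2 * ‖x (k+1) - x k‖^2 ≤ t/2 * ‖x (k+1) - x k‖^2 := by
      nlinarith [sq_nonneg ‖x (k+1) - x k‖]
    simp only [hF_def]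
    linarith
  have hmono : ∀ k, F k ≤ F 0 := by
    intro k
    induction k with
    | zero => exact le_rfl
    | succ m ih => exact (key m).trans ih
  have hsub : Set.range x ⊆ {z | f z ≤ ((F 0 : ℝ) : EReal)} := by
    rintro _ ⟨k, rfl⟩
    show f (x k) ≤ _
    rw [hfF k]
    exact_mod_cast hmono k
  have hbdd := (hlevel (F 0)).subset hsub
  refine ⟨hbdd, ?_⟩
  obtain ⟨xstar, -, φ, hφ, htend⟩ :=
    tendsto_subseq_of_bounded hbdd (fun k => Set.mem_range_self k)
  exact ⟨xstar, φ, hφ, htend⟩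
end

section
/- Let {x^k} be a sequence in ℝⁿ, let {b_k} be a sequence of nonnegative real numbers, let γ > 0, and let N ∈ ℕ, N ≥ 1, be such that for every k ≥ N: ‖x^{k+1} − x^k‖ ≤ (1/4)‖x^k − x^{k−1}‖ + γ·(b_k − b_{k+1}). Then Σ_{k=1}^{∞} ‖x^{k+1} − x^k‖ < +∞; in particular {x^k} is a Cauchy sequence and hence converges. Moreover, for every k ≥ 1, Σ_{j=1}^{k} ‖x^{N+j} − x^{N+j−1}‖ ≤ (4/3)·[ ‖x^{N−1} − x^N‖/4 + γ·b_N ]. -/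
open Filter Topology

/-- Key summability estimate: if for all `k ≥ N`,
`‖x^{k+1} − x^k‖ ≤ (1/4)‖x^k − x^{k−1}‖ + γ(b_k − b_{k+1})` with `b_k ≥ 0`, then
`Σ ‖x^{k+1} − x^k‖ < ∞`, `{x^k}` is Cauchy and converges, and for every `k ≥ 1`,
`Σ_{j=1}^{k} ‖x^{N+j} − x^{N+j−1}‖ ≤ (4/3)(‖x^{N−1} − x^N‖/4 + γ b_N)`. -/
theorem stmt_9 {n : ℕ}
    (x : ℕ → EuclideanSpace ℝ (Fin n))
    (b : ℕ → ℝ) (hb : ∀ k, 0 ≤ b k)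
    (γ : ℝ) (hγ : 0 < γ)
    (N : ℕ) (hN : 1 ≤ N)
    (hrec : ∀ k ≥ N, ‖x (k+1) - x k‖ ≤ (1/4) * ‖x k - x (k-1)‖ + γ * (b k - b (k+1))) :
    Summable (fun k => ‖x (k+1) - x k‖) ∧
    CauchySeq x ∧
    (∃ xstar, Tendsto x atTop (𝓝 xstar)) ∧
    (∀ k ≥ 1, ∑ j ∈ Finset.Icc 1 k, ‖x (N+j) - x (N+j-1)‖
        ≤ (4/3) * (‖x (N-1) - x N‖/4 + γ * b N)) := by
  set a : ℕ → ℝ := fun k => ‖x (k+1) - x k‖ with ha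
  have ha_nonneg : ∀ k, 0 ≤ a k := fun k => norm_nonneg _
  -- recurrence in terms of a
  have hrec' : ∀ k, N ≤ k → a k ≤ (1/4) * a (k-1) + γ * (b k - b (k+1)) := by
    intro k hk
    have h1 : (k - 1) + 1 = k := Nat.succ_pred_eq_of_pos (lt_of_lt_of_le hN hk)
    have := hrec k hk
    simpa [ha, h1] using this
  -- key inductive estimate
  have key : ∀ m, N ≤ m →
      (3/4) * (∑ i ∈ Finset.Ico N m, a i) + (1/4) * a (m-1)
        ≤ (1/4) * a (N-1) + γ * (b N - b m) := by
    intro m hm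
    induction m, hm using Nat.le_induction with
    | base => simp
    | succ m hm ih =>
      have hsum : ∑ i ∈ Finset.Ico N (m+1), a i
          = (∑ i ∈ Finset.Ico N m, a i) + a m := by
        rw [Finset.sum_Ico_succ_top hm]
      have hm1 : (m + 1) - 1 = m := rfl
      have hrm := hrec' m hm
      rw [hsum, hm1]
      nlinarith [ih, hrm]
  set C : ℝ := (4/3) * ((1/4) * a (N-1) + γ * b N) with hC
  have hC_nonneg : 0 ≤ C := by
    have := ha_nonneg (N-1); have := hb N
    positivity
  have bound : ∀ m, ∑ i ∈ Finset.Ico N m, a i ≤ C := by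
    intro m
    rcases le_or_gt N m with hm | hm
    · have h := key m hm
      have h1 : 0 ≤ a (m-1) := ha_nonneg _
      have h2 : 0 ≤ b m := hb m
      nlinarith
    · rw [Finset.Ico_eq_empty (by omega)]
      simpa using hC_nonneg
  -- summability
  have hsummable : Summable a := by
    apply summable_of_sum_range_le (c := (∑ i ∈ Finset.range N, a i) + C) ha_nonneg
    intro m
    rcases le_or_gt N m with hm | hm
    · have : ∑ i ∈ Finset.range m, a i
          = (∑ i ∈ Finset.range N, a i) + ∑ i ∈ Finset.Ico N m, a i := by
        rw [Finset.range_eq_Ico, Finset.range_eq_Ico]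
        exact (Finset.sum_Ico_consecutive a (Nat.zero_le N) hm).symm
      rw [this]
      exact add_le_add_right (bound m) _
    · have hsub : Finset.range m ⊆ Finset.range N :=
        Finset.range_subset_range.mpr hm.le
      calc ∑ i ∈ Finset.range m, a i
          ≤ ∑ i ∈ Finset.range N, a i :=
            Finset.sum_le_sum_of_subset_of_nonneg hsub (fun i _ _ => ha_nonneg i)
        _ ≤ _ := le_add_of_nonneg_right hC_nonneg
  refine ⟨hsummable, ?_, ?_, ?_⟩
  · -- Cauchy
    apply cauchySeq_of_summable_dist
    apply hsummable.congr
    intro k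
    simp [ha, dist_eq_norm, norm_sub_rev]
  · exact cauchySeq_tendsto_of_complete (by
      apply cauchySeq_of_summable_dist
      apply hsummable.congr
      intro k
      simp [ha, dist_eq_norm, norm_sub_rev])
  · intro k hk
    have heq : ∑ j ∈ Finset.Icc 1 k, ‖x (N+j) - x (N+j-1)‖
        = ∑ i ∈ Finset.Ico N (N+k), a i := by
      rw [show Finset.Icc 1 k = Finset.Ico 1 (k+1) by rfl,
        Finset.sum_Ico_eq_sum_range, Finset.sum_Ico_eq_sum_range]
      apply Finset.sum_congr (by simp)
      intro i _
      have h1 : N + (1 + i) = (N + i) + 1 := by omega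
      have h2 : N + (1 + i) - 1 = N + i := by omega
      simp [ha, h1, h2]
    have hnorm : ‖x (N-1) - x N‖ = a (N-1) := by
      have h1 : (N - 1) + 1 = N := Nat.succ_pred_eq_of_pos hN
      show ‖x (N-1) - x N‖ = ‖x ((N-1)+1) - x (N-1)‖
      rw [h1, norm_sub_rev]
    rw [heq, hnorm]
    calc ∑ i ∈ Finset.Ico N (N+k), a i ≤ C := bound _
      _ = (4/3) * (a (N-1)/4 + γ * b N) := by rw [hC]; ring
end

section
/- Let B be a nonempty closed subset of ℝⁿ and let x̄ ∈ ℝⁿ. Then the subdifferential of the convex function h_B at x̄ equals the convex hull of the projection set: {v ∈ ℝⁿ : ⟨v, x − x̄⟩ ≤ h_B(x) − h_B(x̄) for all x ∈ ℝⁿ} = conv P_B(x̄), where P_B(x̄) = {y ∈ B : ‖x̄ − y‖ = dist(x̄, B)} is nonempty and compact (so its convex hull is compact, hence closed). -/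
open Metric Set Function

lemma sum_extend_zero'' {ι κ M : Type*} [Fintype ι] [Fintype κ] [DecidableEq κ]
    [AddCommMonoid M] (e : ι ↪ κ) (f : ι → M) :
    ∑ j, Function.extend e f 0 j = ∑ i, f i := by
  have h1 : ∑ j ∈ Finset.univ.map e, Function.extend e f 0 j
      = ∑ j : κ, Function.extend e f 0 j :=
    Finset.sum_subset (Finset.subset_univ _)
      (fun j _ hj => Function.extend_apply' _ _ _ (by simpa [Finset.mem_map] using hj))
  rw [← h1, Finset.sum_map]
  exact Finset.sum_congr rfl fun i _ => e.injective.extend_apply _ _ _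

lemma isCompact_convexHull'' {E : Type*} [NormedAddCommGroup E] [NormedSpace ℝ E]
    [FiniteDimensional ℝ E] {s : Set E} (hs : IsCompact s) :
    IsCompact (convexHull ℝ s) := by
  rcases s.eq_empty_or_nonempty with rfl | ⟨y₀, hy₀⟩
  · simp
  set d := Module.finrank ℝ E + 1 with hd
  have key : convexHull ℝ s =
      (fun p : (Fin d → ℝ) × (Fin d → E) => ∑ i, p.1 i • p.2 i) ''
        (stdSimplex ℝ (Fin d) ×ˢ Set.univ.pi fun _ => s) := by
    apply Set.Subset.antisymm
    · intro x hx
      obtain ⟨ι, hfin, z, w, hzs, hai, hwpos, hwsum, hx⟩ :=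
        eq_pos_convex_span_of_mem_convexHull hx
      have hcard : Fintype.card ι ≤ d := by
        calc Fintype.card ι ≤ Module.finrank ℝ (vectorSpan ℝ (Set.range z)) + 1 :=
              hai.card_le_finrank_succ
        _ ≤ d := Nat.add_le_add_right (Submodule.finrank_le _) 1
      obtain ⟨e⟩ : Nonempty (ι ↪ Fin d) := by
        apply Function.Embedding.nonempty_of_card_le
        simpa using hcard
      set W : Fin d → ℝ := Function.extend e w 0 with hW
      set Z : Fin d → E := Function.extend e z (fun _ => y₀) with hZ
      refine ⟨(W, Z), ⟨⟨?_, ?_⟩, ?_⟩, ?_⟩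
      · intro j
        show 0 ≤ W j
        by_cases h : ∃ i, e i = j
        · obtain ⟨i, rfl⟩ := h
          rw [hW, e.injective.extend_apply]
          exact (hwpos i).le
        · rw [hW, Function.extend_apply' _ _ _ h]; exact le_rfl
      · rw [hW, sum_extend_zero'']; exact hwsum
      · intro j _
        show Z j ∈ s
        by_cases h : ∃ i, e i = j
        · obtain ⟨i, rfl⟩ := h
          rw [hZ, e.injective.extend_apply]
          exact hzs (Set.mem_range_self i)
        · rw [hZ, Function.extend_apply' _ _ _ h]; exact hy₀
      · have hWZ : (fun j => W j • Z j) = Function.extend e (fun i => w i • z i) 0 := by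
          funext j
          by_cases h : ∃ i, e i = j
          · obtain ⟨i, rfl⟩ := h
            rw [hW, hZ, e.injective.extend_apply, e.injective.extend_apply,
              e.injective.extend_apply]
          · rw [hW, hZ, Function.extend_apply' _ _ _ h, Function.extend_apply' _ _ _ h,
              Function.extend_apply' _ _ _ h]
            simp
        show ∑ j, W j • Z j = x
        calc ∑ j, W j • Z j = ∑ j, Function.extend e (fun i => w i • z i) 0 j :=
              Finset.sum_congr rfl fun j _ => congrFun hWZ j
        _ = ∑ i, w i • z i := sum_extend_zero'' _ _
        _ = x := hx
    · rintro x ⟨⟨w, z⟩, ⟨⟨hw0, hw1⟩, hz⟩, rfl⟩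
      exact Convex.sum_mem (convex_convexHull ℝ s) (fun i _ => hw0 i) hw1
        (fun i _ => subset_convexHull ℝ s (hz i (Set.mem_univ i)))
  rw [key]
  apply IsCompact.image
  · exact (IsCompact.prod (isCompact_stdSimplex ℝ (Fin d)) (isCompact_univ_pi fun _ => hs))
  · exact continuous_finset_sum _ fun i _ =>
      (((continuous_apply i).comp continuous_fst).smul ((continuous_apply i).comp continuous_snd))

open scoped RealInnerProductSpace
open Metric Filter

section aux
variable {E : Type*} [NormedAddCommGroup E] [InnerProductSpace ℝ E]

lemma hB_lower' {B : Set E} {y : E} (hy : y ∈ B) (x : E) :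
    ⟪x, y⟫ - ‖y‖^2/2 ≤ ‖x‖^2/2 - (Metric.infDist x B)^2/2 := by
  have h1 : Metric.infDist x B ≤ ‖x - y‖ := by
    rw [← dist_eq_norm]; exact Metric.infDist_le_dist_of_mem hy
  have h0 : 0 ≤ Metric.infDist x B := Metric.infDist_nonneg
  have h2 : (Metric.infDist x B)^2 ≤ ‖x - y‖^2 := pow_le_pow_left₀ h0 h1 2
  have h3 := @norm_sub_sq_real E _ _ x y
  linarith

lemma hB_eq' {B : Set E} {y : E} {x : E}
    (h : Metric.infDist x B = dist x y) :
    ‖x‖^2/2 - (Metric.infDist x B)^2/2 = ⟪x, y⟫ - ‖y‖^2/2 := by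
  rw [h, dist_eq_norm]
  have := @norm_sub_sq_real E _ _ x y
  linarith
end aux



open scoped RealInnerProductSpace

/-- For a nonempty closed `B ⊆ ℝⁿ` and `xb ∈ ℝⁿ`, the (convex-analysis) subdifferential
of `h_B(x) = ½‖x‖² − ½ dist(x,B)²` at `xb` equals `conv P_B(xb)`; moreover the projection
set `P_B(xb)` is nonempty and compact (hence its convex hull is compact). -/
theorem stmt_13 {n : ℕ} (B : Set (EuclideanSpace ℝ (Fin n)))
    (hB : B.Nonempty) (hBclosed : IsClosed B)
    (xb : EuclideanSpace ℝ (Fin n)) :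
    {v : EuclideanSpace ℝ (Fin n) | ∀ x, ⟪v, x - xb⟫
        ≤ (‖x‖^2/2 - (Metric.infDist x B)^2/2) - (‖xb‖^2/2 - (Metric.infDist xb B)^2/2)}
      = convexHull ℝ {y ∈ B | ‖xb - y‖ = Metric.infDist xb B} ∧
    {y ∈ B | ‖xb - y‖ = Metric.infDist xb B}.Nonempty ∧
    IsCompact {y ∈ B | ‖xb - y‖ = Metric.infDist xb B} ∧
    IsCompact (convexHull ℝ {y ∈ B | ‖xb - y‖ = Metric.infDist xb B}) := by
  classical
  set P : Set (EuclideanSpace ℝ (Fin n)) := {y ∈ B | ‖xb - y‖ = Metric.infDist xb B} with hP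
  set D : ℝ := Metric.infDist xb B with hD
  obtain ⟨y0, hy0B, hy0d⟩ := hBclosed.exists_infDist_eq_dist hB xb
  have hPne : P.Nonempty := ⟨y0, hy0B, by rw [hy0d, dist_eq_norm]⟩
  have hPclosed : IsClosed P := by
    have h : P = B ∩ {y | ‖xb - y‖ = D} := rfl
    rw [h]
    exact hBclosed.inter
      (isClosed_eq ((continuous_const.sub continuous_id).norm) continuous_const)
  have hPsub : P ⊆ Metric.closedBall xb D := fun y hy => by
    rw [Metric.mem_closedBall, dist_comm, dist_eq_norm]
    exact hy.2.le
  have hPcompact : IsCompact P := (isCompact_closedBall xb D).of_isClosed_subset hPclosed hPsub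
  have hCH : IsCompact (convexHull ℝ P) := isCompact_convexHull'' hPcompact
  refine ⟨?_, hPne, hPcompact, hCH⟩
  apply Set.Subset.antisymm
  · -- hard direction
    intro v hv
    simp only [Set.mem_setOf_eq] at hv
    by_contra hvP
    obtain ⟨f, u, hfu, hufv⟩ := geometric_hahn_banach_closed_point
      (convex_convexHull ℝ P) hCH.isClosed hvP
    set d := (InnerProductSpace.toDual ℝ (EuclideanSpace ℝ (Fin n))).symm f with hdd
    have hdf : ∀ x, ⟪d, x⟫ = f x := fun x => InnerProductSpace.toDual_symm_apply
    have htpos : ∀ k : ℕ, (0:ℝ) < 1/(k+1) := fun k => by positivity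
    have hex : ∀ k : ℕ, ∃ y ∈ B, Metric.infDist (xb + (1/(k+1) : ℝ) • d) B
        = dist (xb + (1/(k+1) : ℝ) • d) y :=
      fun k => hBclosed.exists_infDist_eq_dist hB _
    choose y hyB hyd using hex
    have hA : ∀ k : ℕ, ⟪v, d⟫ ≤ ⟪d, y k⟫ := by
      intro k
      set t : ℝ := 1/(k+1) with ht
      have hx := hv (xb + t • d)
      have e1 : ⟪v, xb + t • d - xb⟫ = t * ⟪v, d⟫ := by
        rw [add_sub_cancel_left, real_inner_smul_right]
      have e2 := hB_eq' (hyd k)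
      have e3 := hB_lower' (hyB k) xb
      have e4 : ⟪xb + t • d, y k⟫ = ⟪xb, y k⟫ + t * ⟪d, y k⟫ := by
        rw [inner_add_left, real_inner_smul_left]
      rw [e1] at hx
      have key : t * ⟪v, d⟫ ≤ t * ⟪d, y k⟫ := by linarith
      exact le_of_mul_le_mul_left key (htpos k)
    have hdistk : ∀ k : ℕ, dist (xb + (1/(k+1) : ℝ) • d) xb = (1/(k+1) : ℝ) * ‖d‖ := by
      intro k
      rw [dist_eq_norm, add_sub_cancel_left, norm_smul, Real.norm_eq_abs,
        abs_of_pos (htpos k)]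
    have hDk : ∀ k : ℕ, dist (y k) xb ≤ D + 2*(1/(k+1) : ℝ)*‖d‖ := by
      intro k
      set t : ℝ := 1/(k+1) with ht
      calc dist (y k) xb ≤ dist (y k) (xb + t • d) + dist (xb + t • d) xb :=
            dist_triangle _ _ _
      _ = Metric.infDist (xb + t • d) B + t * ‖d‖ := by
            rw [dist_comm, ← hyd k, hdistk k]
      _ ≤ (Metric.infDist xb B + dist (xb + t • d) xb) + t * ‖d‖ := by
            gcongr
            exact Metric.infDist_le_infDist_add_dist
      _ = D + 2*t*‖d‖ := by rw [hdistk k, ← hD]; ring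
    have hball : ∀ k : ℕ, y k ∈ Metric.closedBall xb (D + 2*‖d‖) := by
      intro k
      rw [Metric.mem_closedBall]
      have h1 := hDk k
      have ht1 : (1:ℝ)/(k+1) ≤ 1 := by
        rw [div_le_one (by positivity)]
        linarith [Nat.cast_nonneg (α := ℝ) k]
      nlinarith [norm_nonneg d]
    obtain ⟨ys, _, φ, hmono, hlim⟩ :=
      (isCompact_closedBall xb (D + 2*‖d‖)).tendsto_subseq hball
    have hysB : ys ∈ B :=
      hBclosed.mem_of_tendsto hlim (Filter.Eventually.of_forall fun k => hyB (φ k))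
    have hnormlim : Tendsto (fun k => ‖xb - y (φ k)‖) atTop (nhds ‖xb - ys‖) :=
      (tendsto_const_nhds.sub hlim).norm
    have hlb : ∀ k : ℕ, D ≤ ‖xb - y (φ k)‖ := fun k => by
      rw [← dist_eq_norm]
      exact Metric.infDist_le_dist_of_mem (hyB (φ k))
    have hub : ∀ k : ℕ, ‖xb - y (φ k)‖ ≤ D + 2*(1/(k+1) : ℝ)*‖d‖ := by
      intro k
      have h1 := hDk (φ k)
      rw [dist_comm, dist_eq_norm] at h1
      have hk : (k:ℝ)+1 ≤ (φ k : ℝ)+1 := by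
        exact_mod_cast Nat.succ_le_succ hmono.le_apply
      have h2 : (1:ℝ)/(φ k + 1) ≤ 1/(k+1) := by
        apply div_le_div_of_nonneg_left (by norm_num) (by positivity) hk
      nlinarith [norm_nonneg d]
    have hsq : Tendsto (fun k => ‖xb - y (φ k)‖) atTop (nhds D) := by
      have hup : Tendsto (fun k : ℕ => D + 2*(1/(k+1) : ℝ)*‖d‖) atTop (nhds D) := by
        have h0 : Tendsto (fun k : ℕ => 1/((k:ℝ)+1)) atTop (nhds 0) :=
          tendsto_one_div_add_atTop_nhds_zero_nat
        have := ((h0.const_mul 2).mul_const ‖d‖).const_add D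
        simpa using this
      exact tendsto_of_tendsto_of_tendsto_of_le_of_le tendsto_const_nhds hup hlb hub
    have hysD : ‖xb - ys‖ = D := tendsto_nhds_unique hnormlim hsq
    have hysP : ys ∈ P := ⟨hysB, hysD⟩
    have hinlim : Tendsto (fun k => ⟪d, y (φ k)⟫) atTop (nhds ⟪d, ys⟫) :=
      tendsto_const_nhds.inner hlim
    have hvd : ⟪v, d⟫ ≤ ⟪d, ys⟫ :=
      ge_of_tendsto hinlim (Filter.Eventually.of_forall fun k => hA (φ k))
    have h1 : f ys < u := hfu ys (subset_convexHull ℝ P hysP)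
    have h2 : u < f v := hufv
    have h3 := hdf ys
    have h4 := hdf v
    have h5 := real_inner_comm d v
    linarith
  · -- easy direction
    apply convexHull_min
    · intro y hy
      simp only [Set.mem_setOf_eq]
      intro x
      have h1 := hB_lower' hy.1 x
      have h2 : ‖xb‖^2/2 - (Metric.infDist xb B)^2/2 = ⟪xb, y⟫ - ‖y‖^2/2 :=
        hB_eq' (by rw [dist_eq_norm, ← hy.2])
      have h3 : ⟪y, x - xb⟫ = ⟪y, x⟫ - ⟪y, xb⟫ := inner_sub_right _ _ _
      have h4 := real_inner_comm y x
      have h5 := real_inner_comm y xb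
      linarith
    · intro v1 hv1 v2 hv2 a b ha hb hab
      simp only [Set.mem_setOf_eq] at hv1 hv2 ⊢
      intro x
      have e : ⟪a • v1 + b • v2, x - xb⟫ = a * ⟪v1, x - xb⟫ + b * ⟪v2, x - xb⟫ := by
        rw [inner_add_left, real_inner_smul_left, real_inner_smul_left]
      rw [e]
      nlinarith [mul_le_mul_of_nonneg_left (hv1 x) ha, mul_le_mul_of_nonneg_left (hv2 x) hb]
end

section
/- Let A and B be nonempty closed subsets of ℝⁿ, let t > 1, let x^0 ∈ A, and let {x^k} satisfy for each k: y^k ∈ conv P_B(x^k) and x^{k+1} ∈ P_A( (1 − 1/t)·x^k + (1/t)·y^k ). Then x^k ∈ A for all k, and for every k ≥ 1 the descent inequality dist(x^k, B)² − dist(x^{k+1}, B)² ≥ (t − 1)·‖x^k − x^{k+1}‖² holds. -/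
open Metric

lemma key_aux {n : ℕ} (B : Set (EuclideanSpace ℝ (Fin n))) (hB : B.Nonempty)
    (p x' yy : EuclideanSpace ℝ (Fin n))
    (hy : yy ∈ convexHull ℝ {z ∈ B | ‖p - z‖ = Metric.infDist p B}) :
    (Metric.infDist x' B)^2 + 2 * (inner ℝ (x' - p) yy : ℝ)
      ≤ (Metric.infDist p B)^2 + ‖x'‖^2 - ‖p‖^2 := by
  set r : ℝ := (Metric.infDist p B)^2 + ‖x'‖^2 - ‖p‖^2 - (Metric.infDist x' B)^2 with hr
  have hlin : IsLinearMap ℝ (fun z : EuclideanSpace ℝ (Fin n) => 2 * (inner ℝ (x' - p) z : ℝ)) := by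
    constructor
    · intro a b; simp [inner_add_right]; ring
    · intro c a; simp [inner_smul_right]; ring
  have hconv : Convex ℝ {z : EuclideanSpace ℝ (Fin n) |
      2 * (inner ℝ (x' - p) z : ℝ) ≤ r} := convex_halfSpace_le hlin r
  have hsub : {z ∈ B | ‖p - z‖ = Metric.infDist p B} ⊆
      {z : EuclideanSpace ℝ (Fin n) | 2 * (inner ℝ (x' - p) z : ℝ) ≤ r} := by
    rintro z ⟨hzB, hzd⟩
    have h1 : Metric.infDist x' B ≤ ‖x' - z‖ := by
      simpa [dist_eq_norm] using Metric.infDist_le_dist_of_mem (x := x') hzB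
    have h1' : (Metric.infDist x' B)^2 ≤ ‖x' - z‖^2 :=
      pow_le_pow_left₀ (Metric.infDist_nonneg) h1 2
    have e1 : ‖x' - z‖^2 = ‖x'‖^2 - 2 * (inner ℝ x' z : ℝ) + ‖z‖^2 := by
      rw [@norm_sub_sq_real]
    have e2 : ‖p - z‖^2 = ‖p‖^2 - 2 * (inner ℝ p z : ℝ) + ‖z‖^2 := by
      rw [@norm_sub_sq_real]
    have e3 : (inner ℝ (x' - p) z : ℝ) = (inner ℝ x' z : ℝ) - (inner ℝ p z : ℝ) := by
      rw [inner_sub_left]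
    have hzd2 : ‖p - z‖^2 = (Metric.infDist p B)^2 := by rw [hzd]
    simp only [Set.mem_setOf_eq, hr]
    nlinarith [h1', e1, e2, e3, hzd2]
  have := (convexHull_min hsub hconv) hy
  simp only [Set.mem_setOf_eq, hr] at this
  linarith

/-- GPPA for the feasibility problem: if `x^0 ∈ A`, `y^k ∈ conv P_B(x^k)` and
`x^{k+1} ∈ P_A((1 − 1/t)x^k + (1/t)y^k)` with `t > 1`, then `x^k ∈ A` for all `k` and
`dist(x^k,B)² − dist(x^{k+1},B)² ≥ (t − 1)‖x^k − x^{k+1}‖²` for all `k ≥ 1`. -/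
theorem stmt_14 {n : ℕ} (A B : Set (EuclideanSpace ℝ (Fin n)))
    (hA : A.Nonempty) (hAclosed : IsClosed A)
    (hB : B.Nonempty) (hBclosed : IsClosed B)
    (t : ℝ) (ht : 1 < t)
    (x y : ℕ → EuclideanSpace ℝ (Fin n))
    (hx0 : x 0 ∈ A)
    (hy : ∀ k, y k ∈ convexHull ℝ {z ∈ B | ‖x k - z‖ = Metric.infDist (x k) B})
    (hxstep : ∀ k, x (k+1) ∈
      {z ∈ A | ‖((1 - 1/t) • x k + (1/t) • y k) - z‖
          = Metric.infDist ((1 - 1/t) • x k + (1/t) • y k) A}) :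
    (∀ k, x k ∈ A) ∧
    (∀ k ≥ 1, (t - 1) * ‖x k - x (k+1)‖^2
        ≤ (Metric.infDist (x k) B)^2 - (Metric.infDist (x (k+1)) B)^2) := by
  have memA : ∀ k, x k ∈ A := by
    intro k
    induction k with
    | zero => exact hx0
    | succ m _ => exact (hxstep m).1
  refine ⟨memA, ?_⟩
  intro k _
  set p := x k with hp
  set x' := x (k+1) with hx'
  set yy := y k with hyy
  set w := (1 - 1/t) • p + (1/t) • yy with hw
  have ht0 : (0:ℝ) < t := lt_trans one_pos ht
  -- projection inequality
  have hproj : ‖w - x'‖ ≤ ‖w - p‖ := by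
    have h2 := (hxstep k).2
    have h3 : Metric.infDist w A ≤ ‖w - p‖ := by
      simpa [dist_eq_norm] using Metric.infDist_le_dist_of_mem (x := w) (memA k)
    calc ‖w - x'‖ = Metric.infDist w A := h2
    _ ≤ ‖w - p‖ := h3
  have hwp : w - p = (1/t) • (yy - p) := by
    rw [hw]; module
  have hwx : w - x' = (1/t) • (yy - p) - (x' - p) := by
    rw [hw]; module
  have hproj2 : ‖(1/t) • (yy - p) - (x' - p)‖^2 ≤ ‖(1/t) • (yy - p)‖^2 := by
    rw [← hwx, ← hwp]
    exact pow_le_pow_left₀ (norm_nonneg _) hproj 2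
  have hexp : ‖(1/t) • (yy - p) - (x' - p)‖^2
      = ‖(1/t) • (yy - p)‖^2 - 2 * (inner ℝ ((1/t) • (yy - p)) (x' - p) : ℝ) + ‖x' - p‖^2 := by
    rw [@norm_sub_sq_real]
  have hsm : (inner ℝ ((1/t) • (yy - p)) (x' - p) : ℝ) = (1/t) * (inner ℝ (yy - p) (x' - p) : ℝ) :=
    real_inner_smul_left _ _ _
  -- ‖u‖² ≤ (2/t)⟨yy−p, u⟩, so t‖u‖² ≤ 2⟨yy−p,u⟩
  have hkey2 : t * ‖x' - p‖^2 ≤ 2 * (inner ℝ (yy - p) (x' - p) : ℝ) := by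
    have h4 : ‖x' - p‖^2 ≤ 2 * ((1/t) * (inner ℝ (yy - p) (x' - p) : ℝ)) := by
      nlinarith [hproj2, hexp, hsm]
    have := mul_le_mul_of_nonneg_left h4 (le_of_lt ht0)
    calc t * ‖x' - p‖^2 ≤ t * (2 * ((1/t) * (inner ℝ (yy - p) (x' - p) : ℝ))) := this
    _ = 2 * (inner ℝ (yy - p) (x' - p) : ℝ) := by field_simp
  -- key lemma
  have hkey1 := key_aux B hB p x' yy (hy k)
  -- combine
  have einner : (inner ℝ (yy - p) (x' - p) : ℝ)
      = (inner ℝ (x' - p) yy : ℝ) - (inner ℝ (x' - p) p : ℝ) := by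
    rw [real_inner_comm]; rw [inner_sub_right]
  have eu : ‖x' - p‖^2 = ‖x'‖^2 - 2 * (inner ℝ x' p : ℝ) + ‖p‖^2 := by
    rw [@norm_sub_sq_real]
  have ep : (inner ℝ (x' - p) p : ℝ) = (inner ℝ x' p : ℝ) - ‖p‖^2 := by
    rw [inner_sub_left, real_inner_self_eq_norm_sq]
  have hfinal : (Metric.infDist x' B)^2 ≤ (Metric.infDist p B)^2 - (t-1) * ‖x' - p‖^2 := by
    nlinarith [hkey1, hkey2, einner, eu, ep]
  have : ‖p - x'‖ = ‖x' - p‖ := norm_sub_rev _ _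
  rw [this]
  linarith
end

section
/- Let A and B be nonempty closed subsets of ℝⁿ, let t > 1, let x^0 ∈ A, and let {x^k} satisfy for each k: y^k ∈ conv P_B(x^k) and x^{k+1} ∈ P_A( (1 − 1/t)·x^k + (1/t)·y^k ). Then ‖x^k − x^{k+1}‖ → 0 as k → +∞, and the sequence {dist(x^k, B)²} is non-increasing and convergent. -/
open Filter Topology

/-- GPPA for the feasibility problem: under the same iteration as in the descent lemma,
`‖x^k − x^{k+1}‖ → 0` and the sequence `{dist(x^k,B)²}` is non-increasing and convergent. -/
theorem stmt_15 {n : ℕ} (A B : Set (EuclideanSpace ℝ (Fin n)))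
    (hA : A.Nonempty) (hAclosed : IsClosed A)
    (hB : B.Nonempty) (hBclosed : IsClosed B)
    (t : ℝ) (ht : 1 < t)
    (x y : ℕ → EuclideanSpace ℝ (Fin n))
    (hx0 : x 0 ∈ A)
    (hy : ∀ k, y k ∈ convexHull ℝ {z ∈ B | ‖x k - z‖ = Metric.infDist (x k) B})
    (hxstep : ∀ k, x (k+1) ∈
      {z ∈ A | ‖((1 - 1/t) • x k + (1/t) • y k) - z‖
          = Metric.infDist ((1 - 1/t) • x k + (1/t) • y k) A}) :
    Tendsto (fun k => ‖x k - x (k+1)‖) atTop (𝓝 0) ∧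
    Antitone (fun k => (Metric.infDist (x k) B)^2) ∧
    ∃ l : ℝ, Tendsto (fun k => (Metric.infDist (x k) B)^2) atTop (𝓝 l) := by
  have ht0 : (0:ℝ) < t := lt_trans one_pos ht
  have hxA : ∀ k, x k ∈ A := by
    intro k
    cases k with
    | zero => exact hx0
    | succ m => exact (hxstep m).1
  -- claim 1: subgradient inequality
  have claim1 : ∀ k, (Metric.infDist (x (k+1)) B)^2 ≤
      ‖x (k+1) - x k‖^2 + 2 * (inner ℝ (x (k+1) - x k) (x k - y k) : ℝ) + (Metric.infDist (x k) B)^2 := by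
    intro k
    set v := x (k+1) - x k with hv
    set c : ℝ := (inner ℝ (v) (x k) : ℝ) + (‖v‖^2 + (Metric.infDist (x k) B)^2 - (Metric.infDist (x (k+1)) B)^2)/2 with hc
    have hsub : {z ∈ B | ‖x k - z‖ = Metric.infDist (x k) B} ⊆ {z | (inner ℝ (v) (z) : ℝ) ≤ c} := by
      rintro z ⟨hzB, hzd⟩
      have h1 : Metric.infDist (x (k+1)) B ≤ ‖x (k+1) - z‖ := by
        have := Metric.infDist_le_dist_of_mem (x := x (k+1)) hzB
        simpa [dist_eq_norm] using this
      have h2 : (Metric.infDist (x (k+1)) B)^2 ≤ ‖x (k+1) - z‖^2 := by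
        have h0 : 0 ≤ Metric.infDist (x (k+1)) B := Metric.infDist_nonneg
        nlinarith
      have h3 : x (k+1) - z = v + (x k - z) := by rw [hv]; abel
      have h4 : ‖v + (x k - z)‖^2 = ‖v‖^2 + 2*(inner ℝ (v) (x k - z) : ℝ) + ‖x k - z‖^2 :=
        norm_add_sq_real _ _
      have h5 : (inner ℝ (v) (x k - z) : ℝ) = (inner ℝ (v) (x k) : ℝ) - (inner ℝ (v) (z) : ℝ) := inner_sub_right _ _ _
      rw [h3, h4, h5, hzd] at h2
      simp only [Set.mem_setOf_eq, hc]
      linarith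
    have hlin : IsLinearMap ℝ (fun z : EuclideanSpace ℝ (Fin n) => (inner ℝ (v) (z) : ℝ)) := by
      constructor
      · intro a b; exact inner_add_right _ _ _
      · intro r a; simpa using real_inner_smul_right v a r
    have hconvset : Convex ℝ {z : EuclideanSpace ℝ (Fin n) | (inner ℝ (v) (z) : ℝ) ≤ c} :=
      convex_halfSpace_le hlin c
    have hyc : (inner ℝ (v) (y k) : ℝ) ≤ c := convexHull_min hsub hconvset (hy k)
    have h7 : (inner ℝ (v) (x k - y k) : ℝ) = (inner ℝ (v) (x k) : ℝ) - (inner ℝ (v) (y k) : ℝ) := inner_sub_right _ _ _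
    rw [h7]
    simp only [hc] at hyc
    linarith
  -- claim 2: projection inequality
  have claim2 : ∀ k, (inner ℝ (x (k+1) - x k) (x k - y k) : ℝ) ≤ -(t/2) * ‖x (k+1) - x k‖^2 := by
    intro k
    set a := x k - x (k+1) with ha
    set b := (1/t) • (y k - x k) with hb
    set I := (inner ℝ (a) (y k - x k) : ℝ) with hI
    have hw1 : ((1 - 1/t) • x k + (1/t) • y k) - x k = b := by
      rw [hb]; module
    have hw2 : ((1 - 1/t) • x k + (1/t) • y k) - x (k+1) = a + b := by
      rw [ha, hb]; module
    have hproj : ‖((1 - 1/t) • x k + (1/t) • y k) - x (k+1)‖ ≤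
        ‖((1 - 1/t) • x k + (1/t) • y k) - x k‖ := by
      have h1 := (hxstep k).2
      have h2 := Metric.infDist_le_dist_of_mem
        (x := (1 - 1/t) • x k + (1/t) • y k) (hxA k)
      rw [h1]
      simpa [dist_eq_norm] using h2
    rw [hw1, hw2] at hproj
    have hsq : ‖a + b‖^2 ≤ ‖b‖^2 := by
      nlinarith [norm_nonneg (a+b), norm_nonneg b]
    have hexp : ‖a+b‖^2 = ‖a‖^2 + 2*(inner ℝ a b : ℝ) + ‖b‖^2 := norm_add_sq_real _ _
    have hib : (inner ℝ a b : ℝ) = (1/t) * I := by rw [hb, hI]; exact real_inner_smul_right _ _ _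
    have hclean : ‖a‖^2 + 2*((1/t)*I) ≤ 0 := by rw [hexp, hib] at hsq; linarith
    have htne : t ≠ 0 := ht0.ne'
    have key2 : t * ‖a‖^2 + 2 * I ≤ 0 := by
      have h' : t * (‖a‖^2 + 2*((1/t)*I)) ≤ 0 := by
        have := mul_le_mul_of_nonneg_left hclean ht0.le
        simpa using this
      have heq : t * (‖a‖^2 + 2*((1/t)*I)) = t * ‖a‖^2 + 2 * I := by
        field_simp
      linarith [heq ▸ h']
    have h8 : (inner ℝ (x (k+1) - x k) (x k - y k) : ℝ) = I := by
      rw [hI, ha]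
      rw [show x (k+1) - x k = -(x k - x (k+1)) by abel,
          show x k - y k = -(y k - x k) by abel]
      rw [inner_neg_neg]
    have h9 : ‖x (k+1) - x k‖ = ‖a‖ := by
      rw [ha, ← norm_neg]; congr 1; abel
    rw [h8, h9]
    linarith
  -- key descent inequality
  have key : ∀ k, (Metric.infDist (x (k+1)) B)^2 + (t-1) * ‖x k - x (k+1)‖^2
      ≤ (Metric.infDist (x k) B)^2 := by
    intro k
    have h1 := claim1 k
    have h2 := claim2 k
    rw [norm_sub_rev]
    linarith
  have hanti : Antitone (fun k => (Metric.infDist (x k) B)^2) := by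
    apply antitone_nat_of_succ_le
    intro k
    have hk := key k
    have hnn : 0 ≤ (t-1) * ‖x k - x (k+1)‖^2 :=
      mul_nonneg (by linarith) (sq_nonneg _)
    simpa using by linarith [hk, hnn]
  have hbdd : BddBelow (Set.range fun k => (Metric.infDist (x k) B)^2) := by
    refine ⟨0, ?_⟩
    rintro _ ⟨k, rfl⟩
    positivity
  have hconv : Tendsto (fun k => (Metric.infDist (x k) B)^2) atTop
      (𝓝 (⨅ k, (Metric.infDist (x k) B)^2)) := tendsto_atTop_ciInf hanti hbdd
  set l := ⨅ k, (Metric.infDist (x k) B)^2 with hl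
  have hl1 : Tendsto (fun k => (Metric.infDist (x (k+1)) B)^2) atTop (𝓝 l) :=
    hconv.comp (tendsto_add_atTop_nat 1)
  have hdiff : Tendsto (fun k =>
      ((Metric.infDist (x k) B)^2 - (Metric.infDist (x (k+1)) B)^2)/(t-1)) atTop (𝓝 0) := by
    have h := (hconv.sub hl1).div_const (t-1)
    simpa using h
  have hsq0 : Tendsto (fun k => ‖x k - x (k+1)‖^2) atTop (𝓝 0) := by
    refine squeeze_zero (fun k => sq_nonneg _) (fun k => ?_) hdiff
    have hk := key k
    rw [le_div_iff₀ (by linarith : (0:ℝ) < t - 1)]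
    linarith
  have hnorm : Tendsto (fun k => ‖x k - x (k+1)‖) atTop (𝓝 0) := by
    have h := hsq0.sqrt
    have heq : (fun k => Real.sqrt (‖x k - x (k+1)‖^2)) = fun k => ‖x k - x (k+1)‖ := by
      funext k; exact Real.sqrt_sq (norm_nonneg _)
    rw [heq] at h
    simpa using h
  exact ⟨hnorm, hanti, l, hconv⟩
end
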